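/- If n = 3^a · 5^b · q^c with q ≥ 7 prime and a, b, c ≥ 0, and n is not one of 1, 3, 5, 9, 15, then n/φ(n) < e^γ · log log n. -/

import Mathlib

open Real

private lemma exp_nat_eq' (p : ℕ) : Real.exp p = Real.exp 1 ^ p := by
  rw [← Real.exp_nat_mul]; norm_num

private lemma div_mul_nat' (p q : ℕ) (hq : 0 < q) : (q:ℝ) * ((p:ℝ)/q) = p := by
  field_simp

private lemma exp_rat_gt' (p q : ℕ) (hp : p ≠ 0) (hq : 0 < q) (c : ℝ) (hc : 0 ≤ c)
    (h : c ^ q < 2.7182818283 ^ p) : c < Real.exp ((p:ℝ) / q) := by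
  have h1 : (2.7182818283:ℝ) ^ p < Real.exp p := by
    rw [exp_nat_eq']
    exact pow_lt_pow_left₀ Real.exp_one_gt_d9 (by norm_num) hp
  have h2 : c ^ q < Real.exp ((p:ℝ)/q) ^ q := by
    rw [← Real.exp_nat_mul, div_mul_nat' p q hq]
    exact h.trans h1
  exact lt_of_pow_lt_pow_left₀ q (Real.exp_pos _).le h2

private lemma log_rat_lt' (p q : ℕ) (hp : p ≠ 0) (hq : 0 < q) (x : ℝ) (hx : 0 < x)
    (h : (2.7182818286:ℝ) ^ p ≤ x ^ q) : (p:ℝ) / q < Real.log x := by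
  have h1 : Real.exp p < (2.7182818286:ℝ) ^ p := by
    rw [exp_nat_eq']
    exact pow_lt_pow_left₀ Real.exp_one_lt_d9 (Real.exp_pos 1).le hp
  have h2 : Real.exp ((p:ℝ)/q) ^ q < x ^ q := by
    rw [← Real.exp_nat_mul, div_mul_nat' p q hq]
    exact h1.trans_le h
  have h3 : Real.exp ((p:ℝ)/q) < x := lt_of_pow_lt_pow_left₀ q hx.le h2
  rw [← Real.exp_lt_exp, Real.exp_log hx]
  exact h3

private lemma log_rat_gt' (p q : ℕ) (hp : p ≠ 0) (hq : 0 < q) (x : ℝ) (hx : 0 ≤ x)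
    (h : x ^ q < (2.7182818283:ℝ) ^ p) : Real.log x < (p:ℝ) / q := by
  have hpq : (0:ℝ) < (p:ℝ)/q := by
    have h0 : (0:ℝ) < p := by exact_mod_cast Nat.pos_of_ne_zero hp
    positivity
  rcases eq_or_lt_of_le hx with h0 | h0
  · rw [← h0, Real.log_zero]; exact hpq
  have h1 : (2.7182818283:ℝ) ^ p ≤ Real.exp p := by
    rw [exp_nat_eq']
    exact pow_le_pow_left₀ (by norm_num) Real.exp_one_gt_d9.le p
  have h2 : x ^ q < Real.exp ((p:ℝ)/q) ^ q := by
    rw [← Real.exp_nat_mul, div_mul_nat' p q hq]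
    exact h.trans_le h1
  have h3 : x < Real.exp ((p:ℝ)/q) := lt_of_pow_lt_pow_left₀ q (Real.exp_pos _).le h2
  calc Real.log x < Real.log (Real.exp ((p:ℝ)/q)) := Real.log_lt_log h0 h3
    _ = (p:ℝ)/q := Real.log_exp _

private lemma gamma_gt' : (143:ℝ)/250 < Real.eulerMascheroniConstant := by
  have h100 := Real.eulerMascheroniSeq_lt_eulerMascheroniConstant 100
  have hH : (5769:ℚ)/1250 + 143/250 ≤ harmonic 100 := by
    norm_num [harmonic_succ, harmonic_zero]
  have hlog : Real.log 101 < (5769:ℝ)/1250 := by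
    have := log_rat_gt' 5769 1250 (by norm_num) (by norm_num) 101 (by norm_num) (by
      rw [show (1250:ℕ) = 125 * 10 by norm_num, show (5769:ℕ) = 250 * 23 + 19 by norm_num,
        pow_add, pow_mul, pow_mul]
      norm_num)
    simpa using this
  have hH' : (5769:ℝ)/1250 + 143/250 ≤ (harmonic 100 : ℝ) := by
    have := (Rat.cast_le (K := ℝ)).mpr hH
    push_cast at this; exact this
  have hs : (143:ℝ)/250 < Real.eulerMascheroniSeq 100 := by
    rw [Real.eulerMascheroniSeq]
    norm_num
    nlinarith
  linarith

private lemma exp_gamma_gt' : (17717:ℝ)/10000 < Real.exp Real.eulerMascheroniConstant := by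
  have h1 : (17717:ℝ)/10000 < Real.exp ((143:ℝ)/250) := by
    have := exp_rat_gt' 143 250 (by norm_num) (by norm_num) (17717/10000) (by norm_num)
      (by norm_num)
    simpa using this
  exact h1.trans (Real.exp_lt_exp.mpr gamma_gt')

private lemma loglog_gt' (x r s : ℝ) (hr : 0 < r) (h1 : r < Real.log x)
    (h2 : s < Real.log r) : s < Real.log (Real.log x) :=
  h2.trans (Real.log_lt_log hr h1)

private lemma LL7' : (33:ℝ)/50 < Real.log (Real.log 7) := by
  apply loglog_gt' 7 ((35:ℝ)/18) _ (by norm_num)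
  · have := log_rat_lt' 35 18 (by norm_num) (by norm_num) 7 (by norm_num) (by norm_num)
    simpa using this
  · have := log_rat_lt' 33 50 (by norm_num) (by norm_num) ((35:ℝ)/18) (by norm_num) (by norm_num)
    simpa using this

private lemma LL_one' (N : ℝ) (hN : 21 ≤ N) : (1:ℝ) < Real.log (Real.log N) := by
  apply loglog_gt' N 3 _ (by norm_num)
  · have := log_rat_lt' 3 1 (by norm_num) (by norm_num) N (by linarith)
      (by rw [pow_one]; nlinarith)
    simpa using this
  · have := log_rat_lt' 1 1 (by norm_num) (by norm_num) 3 (by norm_num) (by norm_num)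
    simpa using this

private lemma LL45' : (13:ℝ)/12 < Real.log (Real.log 45) := by
  apply loglog_gt' 45 ((15:ℝ)/4) _ (by norm_num)
  · have := log_rat_lt' 15 4 (by norm_num) (by norm_num) 45 (by norm_num) (by norm_num)
    simpa using this
  · have := log_rat_lt' 13 12 (by norm_num) (by norm_num) ((15:ℝ)/4) (by norm_num) (by norm_num)
    simpa using this

private lemma LL105' : (5:ℝ)/4 < Real.log (Real.log 105) := by
  apply loglog_gt' 105 ((9:ℝ)/2) _ (by norm_num)
  · have := log_rat_lt' 9 2 (by norm_num) (by norm_num) 105 (by norm_num) (by norm_num)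
    simpa using this
  · have := log_rat_lt' 5 4 (by norm_num) (by norm_num) ((9:ℝ)/2) (by norm_num) (by norm_num)
    simpa using this

private lemma combine' (n N u v : ℕ) (hn : N ≤ n) (hN : 3 ≤ N) (hv : 0 < v)
    (hφ : v * n ≤ u * n.totient)
    (hA : (u:ℝ)/v < Real.exp Real.eulerMascheroniConstant * Real.log (Real.log N)) :
    (n:ℝ) / n.totient < Real.exp Real.eulerMascheroniConstant * Real.log (Real.log n) := by
  have hn0 : 0 < n := by omega
  have ht : 0 < n.totient := Nat.totient_pos.mpr hn0
  have step1 : (n:ℝ)/n.totient ≤ (u:ℝ)/v := by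
    rw [div_le_div_iff₀ (by exact_mod_cast ht) (by exact_mod_cast hv)]
    have h2 : (v:ℝ) * n ≤ u * n.totient := by exact_mod_cast hφ
    nlinarith
  have hlogN : (0:ℝ) < Real.log N := Real.log_pos (by exact_mod_cast (by omega : 1 < N))
  have hNcast : (N:ℝ) ≤ (n:ℝ) := by exact_mod_cast hn
  have hNpos : (0:ℝ) < N := by positivity
  have mono : Real.log (Real.log N) ≤ Real.log (Real.log n) := by
    gcongr
  calc (n:ℝ)/n.totient ≤ (u:ℝ)/v := step1
    _ < Real.exp Real.eulerMascheroniConstant * Real.log (Real.log N) := hA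
    _ ≤ _ := mul_le_mul_of_nonneg_left mono (Real.exp_nonneg _)

theorem totient_special_form (a b c q n : ℕ) (hq : q.Prime) (hq7 : 7 ≤ q)
    (hn : n = 3 ^ a * 5 ^ b * q ^ c)
    (h : n ∉ ({1, 3, 5, 9, 15} : Finset ℕ)) :
    (n : ℝ) / (Nat.totient n) <
      Real.exp Real.eulerMascheroniConstant * Real.log (Real.log n) := by
  have h3 : Nat.Prime 3 := by norm_num
  have h5 : Nat.Prime 5 := by norm_num
  have hc35 : Nat.Coprime (3^a) (5^b) :=
    Nat.Coprime.pow a b ((Nat.coprime_primes h3 h5).mpr (by norm_num))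
  have hc3q : Nat.Coprime 3 q := (Nat.coprime_primes h3 hq).mpr (by omega)
  have hc5q : Nat.Coprime 5 q := (Nat.coprime_primes h5 hq).mpr (by omega)
  have hcop : Nat.Coprime (3^a*5^b) (q^c) :=
    Nat.Coprime.mul (Nat.Coprime.pow a c hc3q) (Nat.Coprime.pow b c hc5q)
  have hphi : n.totient = (3^a).totient * (5^b).totient * (q^c).totient := by
    rw [hn, Nat.totient_mul hcop, Nat.totient_mul hc35]
  simp only [Finset.mem_insert, Finset.mem_singleton] at h
  push_neg at h
  obtain ⟨h1', h3', h5', h9', h15'⟩ := h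
  have hexp := exp_gamma_gt'
  rcases Nat.eq_zero_or_pos a with ha | ha <;> rcases Nat.eq_zero_or_pos b with hb | hb <;>
    rcases Nat.eq_zero_or_pos c with hc | hc
  -- case a=0, b=0, c=0 : n = 1, excluded
  · exact absurd (by simp [hn, ha, hb, hc]) h1'
  -- case a=0, b=0, c>0 : n = q^c ≥ 7, ratio ≤ 7/6
  · have hq1 : q^c = q^(c-1) * q := by
      conv_lhs => rw [show c = (c-1)+1 by omega]
      rw [pow_succ]
    have hN : 7 ≤ n := by
      have : q ≤ q^c := Nat.le_self_pow (by omega) q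
      simp only [hn, ha, hb, pow_zero, one_mul]
      omega
    apply combine' n 7 7 6 hN (by norm_num) (by norm_num)
    · rw [hphi, hn]
      simp only [ha, hb, pow_zero, Nat.totient_one, one_mul]
      rw [Nat.totient_prime_pow hq hc, hq1]
      calc 6 * (q^(c-1) * q) = q^(c-1) * (6*q) := by ring
        _ ≤ q^(c-1) * (7*(q-1)) := Nat.mul_le_mul_left _ (by omega)
        _ = 7 * (q^(c-1) * (q-1)) := by ring
    · have := mul_lt_mul'' hexp LL7' (by norm_num) (by norm_num)
      push_cast
      refine lt_of_le_of_lt ?_ this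
      norm_num
  -- case a=0, b>0, c=0 : n = 5^b, b ≥ 2, n ≥ 25
  · have hb2 : 2 ≤ b := by
      by_contra hlt
      push_neg at hlt
      interval_cases b
      exact h5' (by simp [hn, ha, hc])
    have hN : 25 ≤ n := by
      have : 5^2 ≤ 5^b := Nat.pow_le_pow_right (by norm_num) hb2
      simp only [hn, ha, hc, pow_zero, one_mul, mul_one]
      omega
    apply combine' n 25 5 4 hN (by norm_num) (by norm_num)
    · rw [hphi, hn]
      simp only [ha, hc, pow_zero, Nat.totient_one, one_mul, mul_one]
      rw [Nat.totient_prime_pow h5 hb]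
      have h51 : 5^b = 5^(b-1) * 5 := by
        conv_lhs => rw [show b = (b-1)+1 by omega]
        rw [pow_succ]
      rw [h51]
      exact Nat.le_of_eq (by ring)
    · have hLL := LL_one' 25 (by norm_num)
      have := mul_lt_mul'' hexp hLL (by norm_num) (by norm_num)
      push_cast
      refine lt_of_lt_of_le ?_ this.le
      norm_num
  -- case a=0, b>0, c>0 : n = 5^b q^c ≥ 35, ratio ≤ 35/24
  · have hN : 35 ≤ n := by
      have hx : 5 ≤ 5^b := Nat.le_self_pow (by omega) 5
      have hy : q ≤ q^c := Nat.le_self_pow (by omega) q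
      have : 5 * 7 ≤ 5^b * q^c := Nat.mul_le_mul hx (by omega)
      simp only [hn, ha, pow_zero, one_mul]
      omega
    apply combine' n 35 35 24 hN (by norm_num) (by norm_num)
    · rw [hphi, hn]
      simp only [ha, pow_zero, Nat.totient_one, one_mul]
      rw [Nat.totient_prime_pow h5 hb, Nat.totient_prime_pow hq hc]
      have h51 : 5^b = 5^(b-1) * 5 := by
        conv_lhs => rw [show b = (b-1)+1 by omega]
        rw [pow_succ]
      have hq1 : q^c = q^(c-1) * q := by
        conv_lhs => rw [show c = (c-1)+1 by omega]
        rw [pow_succ]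
      rw [h51, hq1]
      calc 24 * (5^(b-1)*5 * (q^(c-1)*q)) = 5^(b-1)*q^(c-1) * (24*(5*q)) := by ring
        _ ≤ 5^(b-1)*q^(c-1) * (35*(4*(q-1))) := Nat.mul_le_mul_left _ (by omega)
        _ = 35 * (5^(b-1)*4 * (q^(c-1)*(q-1))) := by ring
    · have hLL := LL_one' 35 (by norm_num)
      have := mul_lt_mul'' hexp hLL (by norm_num) (by norm_num)
      push_cast
      refine lt_of_lt_of_le ?_ this.le
      norm_num
  -- case a>0, b=0, c=0 : n = 3^a, a ≥ 3, n ≥ 27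
  · have ha3 : 3 ≤ a := by
      by_contra hlt
      push_neg at hlt
      interval_cases a
      · exact h3' (by simp [hn, hb, hc])
      · exact h9' (by simp [hn, hb, hc])
    have hN : 27 ≤ n := by
      have : 3^3 ≤ 3^a := Nat.pow_le_pow_right (by norm_num) ha3
      simp only [hn, hb, hc, pow_zero, one_mul, mul_one]
      omega
    apply combine' n 27 3 2 hN (by norm_num) (by norm_num)
    · rw [hphi, hn]
      simp only [hb, hc, pow_zero, Nat.totient_one, one_mul, mul_one]
      rw [Nat.totient_prime_pow h3 ha]
      have h31 : 3^a = 3^(a-1) * 3 := by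
        conv_lhs => rw [show a = (a-1)+1 by omega]
        rw [pow_succ]
      rw [h31]
      exact Nat.le_of_eq (by ring)
    · have hLL := LL_one' 27 (by norm_num)
      have := mul_lt_mul'' hexp hLL (by norm_num) (by norm_num)
      push_cast
      refine lt_of_lt_of_le ?_ this.le
      norm_num
  -- case a>0, b=0, c>0 : n = 3^a q^c ≥ 21, ratio ≤ 7/4
  · have hN : 21 ≤ n := by
      have hx : 3 ≤ 3^a := Nat.le_self_pow (by omega) 3
      have hy : q ≤ q^c := Nat.le_self_pow (by omega) q
      have : 3 * 7 ≤ 3^a * q^c := Nat.mul_le_mul hx (by omega)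
      simp only [hn, hb, pow_zero, mul_one]
      omega
    apply combine' n 21 7 4 hN (by norm_num) (by norm_num)
    · rw [hphi, hn]
      simp only [hb, pow_zero, Nat.totient_one, mul_one]
      rw [Nat.totient_prime_pow h3 ha, Nat.totient_prime_pow hq hc]
      have h31 : 3^a = 3^(a-1) * 3 := by
        conv_lhs => rw [show a = (a-1)+1 by omega]
        rw [pow_succ]
      have hq1 : q^c = q^(c-1) * q := by
        conv_lhs => rw [show c = (c-1)+1 by omega]
        rw [pow_succ]
      rw [h31, hq1]
      calc 4 * (3^(a-1)*3 * (q^(c-1)*q)) = 3^(a-1)*q^(c-1) * (4*(3*q)) := by ring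
        _ ≤ 3^(a-1)*q^(c-1) * (7*(2*(q-1))) := Nat.mul_le_mul_left _ (by omega)
        _ = 7 * (3^(a-1)*2 * (q^(c-1)*(q-1))) := by ring
    · have hLL := LL_one' 21 (by norm_num)
      have := mul_lt_mul'' hexp hLL (by norm_num) (by norm_num)
      push_cast
      refine lt_of_lt_of_le ?_ this.le
      norm_num
  -- case a>0, b>0, c=0 : n = 3^a 5^b, n ≠ 15, so n ≥ 45
  · have hN : 45 ≤ n := by
      rcases Nat.lt_or_ge a 2 with ha2 | ha2
      · have ha1 : a = 1 := by omega
        have hb2 : 2 ≤ b := by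
          by_contra hlt
          push_neg at hlt
          interval_cases b
          exact h15' (by norm_num [hn, ha1, hc])
        have : 5^2 ≤ 5^b := Nat.pow_le_pow_right (by norm_num) hb2
        have h2 : 3 * 25 ≤ 3^a * 5^b := Nat.mul_le_mul (Nat.le_self_pow (by omega) 3) (by omega)
        simp only [hn, hc, pow_zero, mul_one]
        omega
      · have hx : 3^2 ≤ 3^a := Nat.pow_le_pow_right (by norm_num) ha2
        have hy : 5 ≤ 5^b := Nat.le_self_pow (by omega) 5
        have : 9 * 5 ≤ 3^a * 5^b := Nat.mul_le_mul (by omega) hy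
        simp only [hn, hc, pow_zero, mul_one]
        omega
    apply combine' n 45 15 8 hN (by norm_num) (by norm_num)
    · rw [hphi, hn]
      simp only [hc, pow_zero, Nat.totient_one, mul_one]
      rw [Nat.totient_prime_pow h3 ha, Nat.totient_prime_pow h5 hb]
      have h31 : 3^a = 3^(a-1) * 3 := by
        conv_lhs => rw [show a = (a-1)+1 by omega]
        rw [pow_succ]
      have h51 : 5^b = 5^(b-1) * 5 := by
        conv_lhs => rw [show b = (b-1)+1 by omega]
        rw [pow_succ]
      rw [h31, h51]
      exact Nat.le_of_eq (by ring)
    · have := mul_lt_mul'' hexp LL45' (by norm_num) (by norm_num)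
      push_cast
      refine lt_of_le_of_lt ?_ this
      norm_num
  -- case a>0, b>0, c>0 : n = 3^a 5^b q^c ≥ 105, ratio ≤ 35/16
  · have hN : 105 ≤ n := by
      have hx : 3 ≤ 3^a := Nat.le_self_pow (by omega) 3
      have hy : 5 ≤ 5^b := Nat.le_self_pow (by omega) 5
      have hz : q ≤ q^c := Nat.le_self_pow (by omega) q
      have h1 : 3 * 5 ≤ 3^a * 5^b := Nat.mul_le_mul hx hy
      have : (3*5) * 7 ≤ (3^a * 5^b) * q^c := Nat.mul_le_mul h1 (by omega)
      rw [hn]; omega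
    apply combine' n 105 35 16 hN (by norm_num) (by norm_num)
    · rw [hphi, hn]
      rw [Nat.totient_prime_pow h3 ha, Nat.totient_prime_pow h5 hb,
        Nat.totient_prime_pow hq hc]
      have h31 : 3^a = 3^(a-1) * 3 := by
        conv_lhs => rw [show a = (a-1)+1 by omega]
        rw [pow_succ]
      have h51 : 5^b = 5^(b-1) * 5 := by
        conv_lhs => rw [show b = (b-1)+1 by omega]
        rw [pow_succ]
      have hq1 : q^c = q^(c-1) * q := by
        conv_lhs => rw [show c = (c-1)+1 by omega]
        rw [pow_succ]
      rw [h31, h51, hq1]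
      calc 16 * (3^(a-1)*3 * (5^(b-1)*5) * (q^(c-1)*q))
          = 3^(a-1)*5^(b-1)*q^(c-1) * (16*(15*q)) := by ring
        _ ≤ 3^(a-1)*5^(b-1)*q^(c-1) * (35*(8*(q-1))) := Nat.mul_le_mul_left _ (by omega)
        _ = 35 * (3^(a-1)*2 * (5^(b-1)*4) * (q^(c-1)*(q-1))) := by ring
    · have := mul_lt_mul'' hexp LL105' (by norm_num) (by norm_num)
      push_cast
      refine lt_of_le_of_lt ?_ this
      norm_num
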